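/- (Mean ergodic theorem for power bounded operators on reflexive spaces) Let X be a reflexive Banach space and T : X → X a power bounded linear operator. Then the Cesàro means S_m = (1/(m+1)) Σ_{k=0}^{m} T^k converge strongly (pointwise in norm) to a bounded projection P of X onto ker(I − T), and P commutes with T. -/

import Mathlib

open Filter Topology NormedSpace

set_option maxHeartbeats 1000000 in
theorem stmt_12 (X : Type*) [NormedAddCommGroup X] [NormedSpace ℂ X] [CompleteSpace X]
    (hrefl : Function.Surjective (NormedSpace.inclusionInDoubleDual ℂ X))
    (T : X →L[ℂ] X) (C : ℝ) (hC : ∀ n : ℕ, ‖T ^ n‖ ≤ C) :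
    ∃ P : X →L[ℂ] X,
      P.comp P = P ∧
      LinearMap.range (P : X →ₗ[ℂ] X) = LinearMap.ker ((ContinuousLinearMap.id ℂ X - T : X →L[ℂ] X) : X →ₗ[ℂ] X) ∧
      P.comp T = P ∧ T.comp P = P ∧
      ∀ x : X, Filter.Tendsto
        (fun m : ℕ => (((m : ℝ) + 1)⁻¹) • ∑ k ∈ Finset.range (m + 1), (T ^ k) x)
        Filter.atTop (nhds (P x)) := by
  classical
  have hC0 : 0 ≤ C := le_trans (norm_nonneg _) (hC 0)
  set S : ℕ → X →L[ℂ] X := fun m => (((m : ℝ) + 1)⁻¹) • ∑ k ∈ Finset.range (m + 1), T ^ k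
    with hSdef
  have hpos : ∀ m : ℕ, (0 : ℝ) < (m : ℝ) + 1 := fun m => by positivity
  have hSapply : ∀ (m : ℕ) (x : X),
      S m x = (((m : ℝ) + 1)⁻¹) • ∑ k ∈ Finset.range (m + 1), (T ^ k) x := by
    intro m x
    simp [hSdef, ContinuousLinearMap.sum_apply]
  -- uniform bound on the Cesàro means
  have hSnorm : ∀ (m : ℕ) (x : X), ‖S m x‖ ≤ C * ‖x‖ := by
    intro m x
    rw [hSapply, norm_smul]
    have h1 : ‖∑ k ∈ Finset.range (m + 1), (T ^ k) x‖ ≤ ((m : ℝ) + 1) * (C * ‖x‖) := by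
      calc ‖∑ k ∈ Finset.range (m + 1), (T ^ k) x‖
          ≤ ∑ k ∈ Finset.range (m + 1), ‖(T ^ k) x‖ := norm_sum_le _ _
        _ ≤ ∑ k ∈ Finset.range (m + 1), C * ‖x‖ := by
            refine Finset.sum_le_sum fun k _ => ?_
            calc ‖(T ^ k) x‖ ≤ ‖T ^ k‖ * ‖x‖ := (T ^ k).le_opNorm x
              _ ≤ C * ‖x‖ := by gcongr; exact hC k
        _ = ((m : ℝ) + 1) * (C * ‖x‖) := by
            rw [Finset.sum_const, Finset.card_range]
            push_cast
            ring
    calc ‖((m : ℝ) + 1)⁻¹‖ * ‖∑ k ∈ Finset.range (m + 1), (T ^ k) x‖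
        ≤ ((m : ℝ) + 1)⁻¹ * (((m : ℝ) + 1) * (C * ‖x‖)) := by
          rw [Real.norm_eq_abs, abs_of_pos (inv_pos.2 (hpos m))]
          gcongr
      _ = C * ‖x‖ := by field_simp
  -- behaviour on fixed points
  have hpowfix : ∀ (y : X), T y = y → ∀ k : ℕ, (T ^ k) y = y := by
    intro y hy k
    induction k with
    | zero => simp
    | succ n ih => rw [pow_succ, ContinuousLinearMap.mul_apply, hy, ih]
  have hfix : ∀ (y : X), T y = y → ∀ m, S m y = y := by
    intro y hy m
    rw [hSapply]
    rw [Finset.sum_congr rfl fun k _ => hpowfix y hy k, Finset.sum_const, Finset.card_range,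
      ← Nat.cast_smul_eq_nsmul ℝ, smul_smul]
    push_cast
    rw [inv_mul_cancel₀ (hpos m).ne', one_smul]
  -- telescoping on the range of `1 - T`
  have htel : ∀ (v : X) (m : ℕ),
      S m (v - T v) = (((m : ℝ) + 1)⁻¹) • (v - (T ^ (m + 1)) v) := by
    intro v m
    rw [hSapply]
    congr 1
    have h : ∀ k, (T ^ k) (v - T v) = (T ^ k) v - (T ^ (k + 1)) v := by
      intro k
      rw [map_sub, pow_succ, ContinuousLinearMap.mul_apply]
    rw [Finset.sum_congr rfl fun k _ => h k]
    exact Finset.sum_range_sub' (fun k => (T ^ k) v) (m + 1)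
  have hzero : ∀ v : X, Tendsto (fun m => S m (v - T v)) atTop (𝓝 0) := by
    intro v
    apply squeeze_zero_norm (a := fun m : ℕ => ((1 + C) * ‖v‖) * (1 / ((m : ℝ) + 1)))
    · intro m
      rw [htel, norm_smul, Real.norm_eq_abs, abs_of_pos (inv_pos.2 (hpos m)), one_div, mul_comm]
      gcongr
      calc ‖v - (T ^ (m + 1)) v‖ ≤ ‖v‖ + ‖(T ^ (m + 1)) v‖ := norm_sub_le _ _
        _ ≤ ‖v‖ + C * ‖v‖ := by
            gcongr
            calc ‖(T ^ (m + 1)) v‖ ≤ ‖T ^ (m + 1)‖ * ‖v‖ := (T ^ (m + 1)).le_opNorm v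
              _ ≤ C * ‖v‖ := by gcongr; exact hC (m + 1)
        _ = (1 + C) * ‖v‖ := by ring
    · simpa using (tendsto_one_div_add_atTop_nhds_zero_nat).const_mul ((1 + C) * ‖v‖)
  -- T commutes with the Cesàro means
  have hcomm : ∀ (m : ℕ) (x : X), T (S m x) = S m (T x) := by
    intro m x
    rw [hSapply, hSapply, T.map_smul_of_tower, map_sum]
    congr 1
    refine Finset.sum_congr rfl fun k _ => ?_
    calc T ((T ^ k) x) = (T ^ (k + 1)) x := by
          rw [pow_succ', ContinuousLinearMap.mul_apply]
      _ = (T ^ k) (T x) := by rw [pow_succ, ContinuousLinearMap.mul_apply]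
  -- the closed subspace: closure of the range of 1 - T
  set K : Submodule ℂ X := (LinearMap.range ((ContinuousLinearMap.id ℂ X - T : X →L[ℂ] X) : X →ₗ[ℂ] X)).topologicalClosure
    with hKdef
  have hKclosed : IsClosed (K : Set X) := Submodule.isClosed_topologicalClosure _
  have hrangeK : ∀ v : X, v - T v ∈ K := by
    intro v
    apply Submodule.le_topologicalClosure
    exact ⟨v, by simp⟩
  -- Cesàro means tend to zero on K
  have hKzero : ∀ z ∈ K, Tendsto (fun m => S m z) atTop (𝓝 0) := by
    intro z hz
    have hz' : z ∈ closure ((LinearMap.range ((ContinuousLinearMap.id ℂ X - T : X →L[ℂ] X) : X →ₗ[ℂ] X) :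
        Submodule ℂ X) : Set X) := by
      rw [← Submodule.topologicalClosure_coe]
      exact hz
    rw [Metric.tendsto_atTop]
    intro ε hε
    have hC1 : (0 : ℝ) < C + 1 := by linarith
    obtain ⟨w, hw1, hw2⟩ := Metric.mem_closure_iff.mp hz' (ε / (2 * (C + 1))) (by positivity)
    obtain ⟨v, hv⟩ := hw1
    have hvw : v - T v = w := by simpa using hv
    have h1 : Tendsto (fun m => S m w) atTop (𝓝 0) := hvw ▸ hzero v
    obtain ⟨N, hN⟩ := (Metric.tendsto_atTop.mp h1) (ε / 2) (by positivity)
    refine ⟨N, fun n hn => ?_⟩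
    rw [dist_zero_right]
    have hb := hN n hn
    rw [dist_zero_right] at hb
    have hzw : ‖z - w‖ ≤ ε / (2 * (C + 1)) := by
      rw [← dist_eq_norm]; exact hw2.le
    calc ‖S n z‖ = ‖S n (z - w) + S n w‖ := by rw [← map_add, sub_add_cancel]
      _ ≤ ‖S n (z - w)‖ + ‖S n w‖ := norm_add_le _ _
      _ < C * ‖z - w‖ + ε / 2 := add_lt_add_of_le_of_lt (hSnorm n (z - w)) hb
      _ ≤ (C + 1) * (ε / (2 * (C + 1))) + ε / 2 := by nlinarith [norm_nonneg (z - w)]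
      _ = ε := by field_simp; ring
  -- Hahn-Banach separation from a closed subspace, via the quotient
  have hsep : ∀ (M : Submodule ℂ X), IsClosed (M : Set X) → ∀ z : X, z ∉ M →
      ∃ φ : StrongDual ℂ X, (∀ w ∈ M, φ w = 0) ∧ φ z ≠ 0 := by
    intro M hM z hz
    haveI : IsClosed (M : Set X) := hM
    set mkc : X →L[ℂ] (X ⧸ M) :=
      LinearMap.mkContinuous M.mkQ 1 (fun v => by
        simpa using Submodule.Quotient.norm_mk_le M v) with hmkc
    have hz0 : (Submodule.Quotient.mk z : X ⧸ M) ≠ 0 := by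
      simpa [Submodule.Quotient.mk_eq_zero] using hz
    obtain ⟨g, hg1, hg2⟩ := exists_dual_vector ℂ (Submodule.Quotient.mk z : X ⧸ M) (norm_ne_zero_iff.mpr hz0)
    refine ⟨g.comp mkc, ?_, ?_⟩
    · intro w hw
      have hw0 : mkc w = 0 := by
        simp [hmkc, LinearMap.mkContinuous_apply, Submodule.Quotient.mk_eq_zero, hw]
      simp [hw0]
    · have hzz : mkc z = (Submodule.Quotient.mk z : X ⧸ M) := rfl
      simp only [ContinuousLinearMap.comp_apply, hzz, hg2]
      simpa [norm_eq_zero] using hz0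
  -- cluster point vs limit uniqueness in ℂ
  have hclpt_eq : ∀ {g : ℕ → ℂ} {a b : ℂ}, MapClusterPt a atTop g →
      Tendsto g atTop (𝓝 b) → a = b := by
    intro g a b h1 h2
    haveI : Filter.NeBot (𝓝 a ⊓ Filter.map g atTop) := h1
    exact (Inseparable.of_nhds_neBot (Filter.neBot_of_le (inf_le_inf_left _ h2))).eq
  -- the key convergence result
  have key : ∀ x : X, ∃ y : X, T y = y ∧ Tendsto (fun m => S m x) atTop (𝓝 y) := by
    intro x
    -- weak-* cluster point of the Cesàro means, via Banach-Alaoglu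
    set u : ℕ → WeakDual ℂ (StrongDual ℂ X) :=
      fun m => StrongDual.toWeakDual (inclusionInDoubleDual ℂ X (S m x)) with hu
    have hcpt := WeakDual.isCompact_closedBall (𝕜 := ℂ) (E := StrongDual ℂ X) 0 (C * ‖x‖)
    have hle : Filter.map u atTop ≤
        Filter.principal (WeakDual.toStrongDual ⁻¹' Metric.closedBall 0 (C * ‖x‖)) := by
      rw [Filter.le_principal_iff]
      apply Filter.mem_map.2
      filter_upwards with m
      simp only [Set.mem_preimage, Metric.mem_closedBall, dist_zero_right]
      calc dist (WeakDual.toStrongDual (u m)) 0 = ‖inclusionInDoubleDual ℂ X (S m x)‖ :=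
          (dist_zero_right (WeakDual.toStrongDual (u m))).trans rfl
        _ ≤ ‖S m x‖ := double_dual_bound ℂ X (S m x)
        _ ≤ C * ‖x‖ := hSnorm m x
    obtain ⟨Λ, -, hΛ⟩ := hcpt.exists_mapClusterPt hle
    obtain ⟨y, hy⟩ := hrefl (WeakDual.toStrongDual Λ)
    have hyφ : ∀ φ : StrongDual ℂ X, Λ φ = φ y := by
      intro φ
      exact (DFunLike.congr_fun hy φ).symm
    have hcl : ∀ φ : StrongDual ℂ X, MapClusterPt (φ y) atTop (fun m => φ (S m x)) := by
      intro φ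
      have hc : ContinuousAt (fun Ψ : WeakDual ℂ (StrongDual ℂ X) => Ψ φ) Λ :=
        (WeakDual.eval_continuous φ).continuousAt
      have h := hΛ.continuousAt_comp hc
      rw [← hyφ φ]
      exact h
    -- the cluster point is a fixed point of T
    have hTy : T y = y := by
      refine ((NormedSpace.eq_iff_forall_dual_eq (𝕜 := ℂ)).mpr ?_).symm
      intro φ
      set ψ : StrongDual ℂ X := φ.comp T with hψ
      have h1 : MapClusterPt (φ y - ψ y) atTop (fun m => φ (S m x) - ψ (S m x)) := by
        have hc : ContinuousAt (fun Ψ : WeakDual ℂ (StrongDual ℂ X) => Ψ φ - Ψ ψ) Λ :=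
          ((WeakDual.eval_continuous φ).sub (WeakDual.eval_continuous ψ)).continuousAt
        have h := hΛ.continuousAt_comp hc
        rw [← hyφ φ, ← hyφ ψ]
        exact h
      have h2 : Tendsto (fun m => φ (S m x) - ψ (S m x)) atTop (𝓝 0) := by
        have heq : ∀ m, φ (S m x) - ψ (S m x) = φ (S m (x - T x)) := by
          intro m
          rw [hψ, ContinuousLinearMap.comp_apply, hcomm m x, ← map_sub, ← map_sub]
        have h3 : Tendsto (fun m => φ (S m (x - T x))) atTop (𝓝 (φ 0)) :=
          (φ.continuous.tendsto 0).comp (hzero x)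
        rw [map_zero] at h3
        exact h3.congr fun m => (heq m).symm
      have h4 : φ y - ψ y = 0 := hclpt_eq h1 h2
      have h5 : ψ y = φ (T y) := rfl
      rw [h5] at h4
      exact sub_eq_zero.mp h4
    -- x - y lies in the closure of the range of 1 - T
    have hxy : x - y ∈ K := by
      by_contra hmem
      obtain ⟨φ, hφ0, hφne⟩ := hsep K hKclosed (x - y) hmem
      have hφT : ∀ v : X, φ (T v) = φ v := by
        intro v
        have h := hφ0 _ (hrangeK v)
        rw [map_sub, sub_eq_zero] at h
        exact h.symm
      have hφpow : ∀ k : ℕ, φ ((T ^ k) x) = φ x := by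
        intro k
        induction k with
        | zero => simp
        | succ n ih => rw [pow_succ', ContinuousLinearMap.mul_apply, hφT, ih]
      have hconstm : ∀ m, φ (S m x) = φ x := by
        intro m
        rw [hSapply, φ.map_smul_of_tower, map_sum]
        rw [Finset.sum_congr rfl fun k _ => hφpow k, Finset.sum_const, Finset.card_range,
          ← Nat.cast_smul_eq_nsmul ℝ, smul_smul]
        push_cast
        rw [inv_mul_cancel₀ (hpos m).ne', one_smul]
      have h6 : Tendsto (fun m => φ (S m x)) atTop (𝓝 (φ x)) := by
        simpa [hconstm] using (tendsto_const_nhds : Tendsto (fun _ : ℕ => φ x) atTop (𝓝 (φ x)))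
      have h7 : φ y = φ x := hclpt_eq (hcl φ) h6
      apply hφne
      rw [map_sub, h7, sub_self]
    refine ⟨y, hTy, ?_⟩
    have h1 : Tendsto (fun m => S m (x - y)) atTop (𝓝 0) := hKzero _ hxy
    have h2 : ∀ m, y + S m (x - y) = S m x := by
      intro m
      rw [map_sub, hfix y hTy m]
      abel
    have h3 : Tendsto (fun m => y + S m (x - y)) atTop (𝓝 (y + 0)) :=
      tendsto_const_nhds.add h1
    rw [add_zero] at h3
    exact h3.congr h2
  -- construct the projection P
  choose Pf hPfix hPtend using key
  have hPadd : ∀ x z : X, Pf (x + z) = Pf x + Pf z := by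
    intro x z
    refine tendsto_nhds_unique (hPtend (x + z)) ?_
    have h := (hPtend x).add (hPtend z)
    exact h.congr fun m => (map_add (S m) x z).symm
  have hPsmul : ∀ (a : ℂ) (x : X), Pf (a • x) = a • Pf x := by
    intro a x
    refine tendsto_nhds_unique (hPtend (a • x)) ?_
    have h := (hPtend x).const_smul a
    exact h.congr fun m => (map_smul (S m) a x).symm
  set Plin : X →ₗ[ℂ] X :=
    { toFun := Pf, map_add' := hPadd, map_smul' := hPsmul } with hPlin
  have hPnorm : ∀ x : X, ‖Plin x‖ ≤ C * ‖x‖ := by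
    intro x
    exact le_of_tendsto (hPtend x).norm (Eventually.of_forall fun m => hSnorm m x)
  set P : X →L[ℂ] X := Plin.mkContinuous C hPnorm with hP
  have hPapp : ∀ x : X, P x = Pf x := fun x => rfl
  refine ⟨P, ?_, ?_, ?_, ?_, ?_⟩
  · -- P ∘ P = P
    ext x
    have h1 : T (Pf x) = Pf x := hPfix x
    have h2 : Tendsto (fun m => S m (Pf x)) atTop (𝓝 (Pf x)) := by
      simpa [hfix (Pf x) h1] using
        (tendsto_const_nhds : Tendsto (fun _ : ℕ => Pf x) atTop (𝓝 (Pf x)))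
    show P (P x) = P x
    simp only [hPapp]
    exact tendsto_nhds_unique (hPtend (Pf x)) h2
  · -- range P = ker (1 - T)
    ext z
    simp only [LinearMap.mem_range, LinearMap.mem_ker]
    constructor
    · rintro ⟨x, rfl⟩
      show (ContinuousLinearMap.id ℂ X - T) (P x) = 0
      rw [ContinuousLinearMap.sub_apply, ContinuousLinearMap.id_apply, hPapp, hPfix x, sub_self]
    · intro hzker
      have hz' : z - T z = 0 := by
        have : (ContinuousLinearMap.id ℂ X - T) z = 0 := hzker
        rwa [ContinuousLinearMap.sub_apply, ContinuousLinearMap.id_apply] at this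
      have hTz : T z = z := (sub_eq_zero.mp hz').symm
      refine ⟨z, ?_⟩
      rw [ContinuousLinearMap.coe_coe, hPapp]
      have h2 : Tendsto (fun m => S m z) atTop (𝓝 z) := by
        simpa [hfix z hTz] using (tendsto_const_nhds : Tendsto (fun _ : ℕ => z) atTop (𝓝 z))
      exact tendsto_nhds_unique (hPtend z) h2
  · -- P ∘ T = P
    ext x
    show P (T x) = P x
    rw [hPapp, hPapp]
    refine tendsto_nhds_unique (hPtend (T x)) ?_
    have h1 : Tendsto (fun m => S m x - S m (x - T x)) atTop (𝓝 (Pf x - 0)) :=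
      (hPtend x).sub (hzero x)
    rw [sub_zero] at h1
    exact h1.congr fun m => by rw [← map_sub, sub_sub_cancel]
  · -- T ∘ P = P
    ext x
    show T (P x) = P x
    rw [hPapp]
    exact hPfix x
  · -- convergence of the Cesàro means to P x
    intro x
    have h := hPtend x
    rw [← hPapp] at h
    exact h.congr fun m => hSapply m x
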